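/- arXiv:1312.4492 — 3 statements merged into one kernel-verified Lean document; each statement's English description precedes it below -/
import Mathlib

section
/- Let M > 0 and ε₀ > 0. For each ε ∈ (0, ε₀] let S(·,ε) : ℝ → ℝ be a real trigonometric polynomial S(t,ε) = Σ_{j=1}^N (α_j(ε) cos(μ_j t) + β_j(ε) sin(μ_j t)) whose frequencies satisfy μ_j ≥ 0 and μ_j ≠ 1 for all j, and with |S(t,ε)| ≤ M for all t ≥ 0 and all ε. Let g : [0,∞) × ℝ × (0,ε₀] → ℝ be continuous with |g(t,0,ε)| ≤ M for all t, ε, and such that for every R > 0 there is k_R > 0 with |g(t,u,ε) − g(t,v,ε)| ≤ k_R |u − v| whenever |u|, |v| ≤ R, uniformly in t and ε. If, for each ε, w_ε ∈ C²([0,∞)) solves w'' + w = S(t,ε) + ε g(t,w,ε) with w(0) = 0 and w'(0) = 0, then there exist γ > 0, C > 0 and ε₁ ∈ (0,ε₀] such that for all ε ∈ (0,ε₁] and all t ∈ [0, γ/ε], |w_ε(t)| + |w_ε'(t)| + |w_ε''(t)| ≤ C. -/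
open Real intervalIntegral

lemma hda_sin (a : ℝ) (s : ℝ) :
    HasDerivAt (fun s => Real.sin (a*s) / (2*a)) (Real.cos (a*s) * a / (2*a)) s := by
  have h1 : HasDerivAt (fun s : ℝ => a * s) a s := by
    simpa using (hasDerivAt_id s).const_mul a
  exact h1.sin.div_const (2*a)

lemma hda_cos (a : ℝ) (s : ℝ) :
    HasDerivAt (fun s => -Real.cos (a*s) / (2*a)) (Real.sin (a*s) * a / (2*a)) s := by
  have h1 : HasDerivAt (fun s : ℝ => a * s) a s := by
    simpa using (hasDerivAt_id s).const_mul a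
  have := ((h1.cos.neg).div_const (2*a) : HasDerivAt (fun s => -Real.cos (a*s) / (2*a)) _ s)
  rw [show Real.sin (a*s) * a / (2*a) = -(-Real.sin (a*s) * a) / (2*a) by ring]
  exact this

lemma trig_prod_bound (μ : ℝ) (hμ0 : 0 ≤ μ) (hμ1 : μ ≠ 1) :
    ∃ K > 0, ∀ t : ℝ,
      |∫ s in (0:ℝ)..t, Real.cos (μ*s) * Real.cos s| ≤ K ∧
      |∫ s in (0:ℝ)..t, Real.sin (μ*s) * Real.cos s| ≤ K ∧
      |∫ s in (0:ℝ)..t, Real.cos (μ*s) * Real.sin s| ≤ K ∧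
      |∫ s in (0:ℝ)..t, Real.sin (μ*s) * Real.sin s| ≤ K := by
  set a := μ - 1 with hadef
  set b := μ + 1 with hbdef
  have ha : a ≠ 0 := sub_ne_zero.2 hμ1
  have hbp : (0:ℝ) < b := by rw [hbdef]; linarith
  have hb : b ≠ 0 := ne_of_gt hbp
  have hb1 : (1:ℝ) ≤ b := by rw [hbdef]; linarith
  have hap : (0:ℝ) < |a| := abs_pos.2 ha
  refine ⟨1/|a| + 1, by positivity, fun t => ?_⟩
  -- helper : |x/(2c)| ≤ 1/(2|c|)
  have habs : ∀ (c x : ℝ), c ≠ 0 → |x| ≤ 1 → |x/(2*c)| ≤ 1/(2*|c|) := by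
    intro c x hc hx
    rw [abs_div, abs_mul, abs_two]
    exact div_le_div₀ (by norm_num) hx (by positivity) le_rfl
  have hhalf : ∀ x : ℝ, |x| ≤ 1 → |x/(2*b)| ≤ 1/2 := by
    intro x hx
    refine (habs b x hb hx).trans ?_
    rw [abs_of_pos hbp]
    calc 1/(2*b) ≤ 1/(2*1) := by gcongr
    _ = 1/2 := by norm_num
  have main : ∀ (f F : ℝ → ℝ), (∀ s, HasDerivAt F (f s) s) → Continuous f →
      (∀ s, |F s| ≤ 1/(2*|a|) + 1/2) → |∫ s in (0:ℝ)..t, f s| ≤ 1/|a| + 1 := by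
    intro f F hF hf hFb
    rw [intervalIntegral.integral_eq_sub_of_hasDerivAt (fun s _ => hF s)
      (hf.intervalIntegrable _ _)]
    have h1 := hFb t
    have h2 := hFb 0
    have h3 : |F t - F 0| ≤ |F t| + |F 0| := by
      have := abs_sub_le (F t) 0 (F 0); simpa using this
    have h4 : 2 * (1/(2*|a|)) = 1/|a| := by field_simp
    calc |F t - F 0| ≤ (1/(2*|a|) + 1/2) + (1/(2*|a|) + 1/2) := by linarith
    _ = 1/|a| + 1 := by field_simp; ring
  refine ⟨?_, ?_, ?_, ?_⟩
  · -- cos cos : F = sin(as)/(2a) + sin(bs)/(2b)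
    apply main _ (fun s => Real.sin (a*s)/(2*a) + Real.sin (b*s)/(2*b))
    · intro s
      have h := (hda_sin a s).add (hda_sin b s)
      have hid : Real.cos (a*s) * a/(2*a) + Real.cos (b*s) * b/(2*b)
          = Real.cos (μ*s) * Real.cos s := by
        rw [hadef, hbdef, sub_mul, add_mul, one_mul, Real.cos_sub, Real.cos_add]
        field_simp
        ring
      exact hid ▸ h
    · fun_prop
    · intro s
      have := habs a (Real.sin (a*s)) ha (Real.abs_sin_le_one _)
      have := hhalf (Real.sin (b*s)) (Real.abs_sin_le_one _)
      calc |Real.sin (a*s)/(2*a) + Real.sin (b*s)/(2*b)|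
          ≤ |Real.sin (a*s)/(2*a)| + |Real.sin (b*s)/(2*b)| := abs_add_le _ _
      _ ≤ 1/(2*|a|) + 1/2 := by gcongr <;> assumption
  · -- sin cos : F = -cos(as)/(2a) + -cos(bs)/(2b)
    apply main _ (fun s => -Real.cos (a*s)/(2*a) + -Real.cos (b*s)/(2*b))
    · intro s
      have h := (hda_cos a s).add (hda_cos b s)
      have hid : Real.sin (a*s) * a/(2*a) + Real.sin (b*s) * b/(2*b)
          = Real.sin (μ*s) * Real.cos s := by
        rw [hadef, hbdef, sub_mul, add_mul, one_mul, Real.sin_sub, Real.sin_add]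
        field_simp
        ring
      exact hid ▸ h
    · fun_prop
    · intro s
      have h1 : |(-Real.cos (a*s))/(2*a)| ≤ 1/(2*|a|) := by
        apply habs a _ ha; rw [abs_neg]; exact Real.abs_cos_le_one _
      have h2 : |(-Real.cos (b*s))/(2*b)| ≤ 1/2 := by
        apply hhalf; rw [abs_neg]; exact Real.abs_cos_le_one _
      calc |(-Real.cos (a*s))/(2*a) + (-Real.cos (b*s))/(2*b)|
          ≤ |(-Real.cos (a*s))/(2*a)| + |(-Real.cos (b*s))/(2*b)| := abs_add_le _ _
      _ ≤ 1/(2*|a|) + 1/2 := by gcongr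
  · -- cos sin : cos(μs) sin s = (sin(bs) - sin(as))/2 ; F = -cos(bs)/(2b) - (-cos(as)/(2a))
    apply main _ (fun s => -Real.cos (b*s)/(2*b) - -Real.cos (a*s)/(2*a))
    · intro s
      have h := (hda_cos b s).sub (hda_cos a s)
      have hid : Real.sin (b*s) * b/(2*b) - Real.sin (a*s) * a/(2*a)
          = Real.cos (μ*s) * Real.sin s := by
        rw [hadef, hbdef, sub_mul, add_mul, one_mul, Real.sin_sub, Real.sin_add]
        field_simp
        ring
      exact hid ▸ h
    · fun_prop
    · intro s
      have h1 : |(-Real.cos (a*s))/(2*a)| ≤ 1/(2*|a|) := by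
        apply habs a _ ha; rw [abs_neg]; exact Real.abs_cos_le_one _
      have h2 : |(-Real.cos (b*s))/(2*b)| ≤ 1/2 := by
        apply hhalf; rw [abs_neg]; exact Real.abs_cos_le_one _
      calc |(-Real.cos (b*s))/(2*b) - (-Real.cos (a*s))/(2*a)|
          ≤ |(-Real.cos (b*s))/(2*b)| + |(-Real.cos (a*s))/(2*a)| := by
            have := abs_sub_le ((-Real.cos (b*s))/(2*b)) 0 ((-Real.cos (a*s))/(2*a))
            simpa using this
      _ ≤ 1/(2*|a|) + 1/2 := by linarith
  · -- sin sin : sin(μs) sin s = (cos(as) - cos(bs))/2 ; F = sin(as)/(2a) - sin(bs)/(2b)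
    apply main _ (fun s => Real.sin (a*s)/(2*a) - Real.sin (b*s)/(2*b))
    · intro s
      have h := (hda_sin a s).sub (hda_sin b s)
      have hid : Real.cos (a*s) * a/(2*a) - Real.cos (b*s) * b/(2*b)
          = Real.sin (μ*s) * Real.sin s := by
        rw [hadef, hbdef, sub_mul, add_mul, one_mul, Real.cos_sub, Real.cos_add]
        field_simp
        ring
      exact hid ▸ h
    · fun_prop
    · intro s
      have h1 := habs a (Real.sin (a*s)) ha (Real.abs_sin_le_one _)
      have h2 := hhalf (Real.sin (b*s)) (Real.abs_sin_le_one _)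
      calc |Real.sin (a*s)/(2*a) - Real.sin (b*s)/(2*b)|
          ≤ |Real.sin (a*s)/(2*a)| + |Real.sin (b*s)/(2*b)| := by
            have := abs_sub_le (Real.sin (a*s)/(2*a)) 0 (Real.sin (b*s)/(2*b))
            simpa using this
      _ ≤ 1/(2*|a|) + 1/2 := by linarith


noncomputable def cosBCF (ν : ℝ) : BoundedContinuousFunction ↥(Set.Ici (0:ℝ)) ℝ :=
  BoundedContinuousFunction.mkOfBound
    ⟨fun x => Real.cos (ν * x), by fun_prop⟩ 2 (by
      intro x y
      rw [Real.dist_eq]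
      have := abs_sub_le (Real.cos (ν * (x:ℝ))) 0 (Real.cos (ν * (y:ℝ)))
      have h1 := Real.abs_cos_le_one (ν * (x:ℝ))
      have h2 := Real.abs_cos_le_one (ν * (y:ℝ))
      simp only [sub_zero, zero_sub, abs_neg] at this
      calc |Real.cos (ν*(x:ℝ)) - Real.cos (ν*(y:ℝ))| ≤ _ := this
      _ ≤ 2 := by linarith)

noncomputable def sinBCF (ν : ℝ) : BoundedContinuousFunction ↥(Set.Ici (0:ℝ)) ℝ :=
  BoundedContinuousFunction.mkOfBound
    ⟨fun x => Real.sin (ν * x), by fun_prop⟩ 2 (by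
      intro x y
      rw [Real.dist_eq]
      have := abs_sub_le (Real.sin (ν * (x:ℝ))) 0 (Real.sin (ν * (y:ℝ)))
      have h1 := Real.abs_sin_le_one (ν * (x:ℝ))
      have h2 := Real.abs_sin_le_one (ν * (y:ℝ))
      simp only [sub_zero, zero_sub, abs_neg] at this
      calc |Real.sin (ν*(x:ℝ)) - Real.sin (ν*(y:ℝ))| ≤ _ := this
      _ ≤ 2 := by linarith)

@[simp] lemma cosBCF_apply (ν : ℝ) (x : ↥(Set.Ici (0:ℝ))) : cosBCF ν x = Real.cos (ν * x) := rfl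
@[simp] lemma sinBCF_apply (ν : ℝ) (x : ↥(Set.Ici (0:ℝ))) : sinBCF ν x = Real.sin (ν * x) := rfl

noncomputable def Tmap (N : ℕ) (μ : Fin N → ℝ) :
    ((Fin N → ℝ) × (Fin N → ℝ)) →ₗ[ℝ] BoundedContinuousFunction ↥(Set.Ici (0:ℝ)) ℝ :=
  ∑ j, ((LinearMap.toSpanSingleton ℝ _ (cosBCF (μ j))).comp
          ((LinearMap.proj j).comp (LinearMap.fst ℝ (Fin N → ℝ) (Fin N → ℝ)))
      + (LinearMap.toSpanSingleton ℝ _ (sinBCF (μ j))).comp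
          ((LinearMap.proj j).comp (LinearMap.snd ℝ (Fin N → ℝ) (Fin N → ℝ))))

lemma Tmap_apply (N : ℕ) (μ : Fin N → ℝ) (c : (Fin N → ℝ) × (Fin N → ℝ)) (x : ↥(Set.Ici (0:ℝ))) :
    Tmap N μ c x = ∑ j, (c.1 j * Real.cos (μ j * x) + c.2 j * Real.sin (μ j * x)) := by
  simp [Tmap, LinearMap.sum_apply, LinearMap.toSpanSingleton_apply]

/-- bounded right inverse for Tmap -/
lemma Tmap_rinv (N : ℕ) (μ : Fin N → ℝ) :
    ∃ Cb ≥ (0:ℝ), ∀ c : (Fin N → ℝ) × (Fin N → ℝ), ∃ c' : (Fin N → ℝ) × (Fin N → ℝ),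
      Tmap N μ c' = Tmap N μ c ∧ ‖c'‖ ≤ Cb * ‖Tmap N μ c‖ := by
  set T := Tmap N μ
  haveI := Module.Free.of_divisionRing ℝ ↥(LinearMap.range T)
  haveI : Module.Projective ℝ ↥(LinearMap.range T) := Module.Projective.of_free
  obtain ⟨σ, hσ⟩ := LinearMap.exists_rightInverse_of_surjective T.rangeRestrict
    (LinearMap.range_eq_top.2 (LinearMap.surjective_rangeRestrict T))
  obtain ⟨Cb, hCb0', hCb⟩ := SemilinearMapClass.bound_of_continuous
    (𝕜 := ℝ) (𝕜₂ := ℝ) (E := ↥(LinearMap.range T)) (F := (Fin N → ℝ) × (Fin N → ℝ))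
    (σ₁₂ := RingHom.id ℝ) σ (LinearMap.continuous_of_finiteDimensional (E := ↥(LinearMap.range T)) σ)
  have hCb0 : (0:ℝ) ≤ Cb := le_of_lt hCb0'
  refine ⟨Cb, hCb0, fun c => ?_⟩
  refine ⟨σ ⟨T c, LinearMap.mem_range_self T c⟩, ?_, ?_⟩
  · have := congrArg (fun f => (f ⟨T c, LinearMap.mem_range_self T c⟩ : ↥(LinearMap.range T)))
      hσ
    have h2 : T.rangeRestrict (σ ⟨T c, LinearMap.mem_range_self T c⟩)
        = ⟨T c, LinearMap.mem_range_self T c⟩ := by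
      exact this
    exact congrArg Subtype.val h2
  · have := hCb ⟨T c, LinearMap.mem_range_self T c⟩
    simpa using this



/-- Right-sided derivative on `[0,∞)`. -/
noncomputable def dIci (f : ℝ → ℝ) : ℝ → ℝ := derivWithin f (Set.Ici 0)

set_option maxHeartbeats 2000000 in
/-- Key technical remainder lemma: for `w'' + w = S(t,ε) + ε g(t,w,ε)` with zero data,
non-resonant trigonometric forcing `S` and locally Lipschitz `g`, the solution is
bounded in `C²` on time intervals `[0, γ/ε]`. -/
theorem stmt_0 (M ε₀ : ℝ) (hM : 0 < M) (hε₀ : 0 < ε₀)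
    (N : ℕ) (α β : Fin N → ℝ → ℝ) (μ : Fin N → ℝ)
    (hμ0 : ∀ j, 0 ≤ μ j) (hμ1 : ∀ j, μ j ≠ 1)
    (S : ℝ → ℝ → ℝ)
    (hSdef : ∀ t ε, S t ε = ∑ j, (α j ε * Real.cos (μ j * t) + β j ε * Real.sin (μ j * t)))
    (hSbd : ∀ t ≥ (0:ℝ), ∀ ε ∈ Set.Ioc (0:ℝ) ε₀, |S t ε| ≤ M)
    (g : ℝ → ℝ → ℝ → ℝ)
    (hgcont : ContinuousOn (fun q : ℝ × ℝ × ℝ => g q.1 q.2.1 q.2.2)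
        ((Set.Ici (0:ℝ)) ×ˢ ((Set.univ : Set ℝ) ×ˢ (Set.Ioc (0:ℝ) ε₀))))
    (hg0 : ∀ t ≥ (0:ℝ), ∀ ε ∈ Set.Ioc (0:ℝ) ε₀, |g t 0 ε| ≤ M)
    (hglip : ∀ R > (0:ℝ), ∃ kR > (0:ℝ), ∀ t ≥ (0:ℝ), ∀ ε ∈ Set.Ioc (0:ℝ) ε₀,
        ∀ u v : ℝ, |u| ≤ R → |v| ≤ R → |g t u ε - g t v ε| ≤ kR * |u - v|)
    (w : ℝ → ℝ → ℝ)
    (hwreg : ∀ ε ∈ Set.Ioc (0:ℝ) ε₀, ContDiffOn ℝ 2 (w ε) (Set.Ici 0))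
    (hode : ∀ ε ∈ Set.Ioc (0:ℝ) ε₀, ∀ t ≥ (0:ℝ),
        dIci (dIci (w ε)) t + w ε t = S t ε + ε * g t (w ε t) ε)
    (hw0 : ∀ ε ∈ Set.Ioc (0:ℝ) ε₀, w ε 0 = 0)
    (hw0' : ∀ ε ∈ Set.Ioc (0:ℝ) ε₀, dIci (w ε) 0 = 0) :
    ∃ γ > (0:ℝ), ∃ C > (0:ℝ), ∃ ε₁ ∈ Set.Ioc (0:ℝ) ε₀, ∀ ε ∈ Set.Ioc (0:ℝ) ε₁,
      ∀ t ∈ Set.Icc (0:ℝ) (γ / ε),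
        |w ε t| + |dIci (w ε) t| + |dIci (dIci (w ε)) t| ≤ C := by
  -- trig integral bounds per frequency
  choose K hKpos hK using fun j => trig_prod_bound (μ j) (hμ0 j) (hμ1 j)
  obtain ⟨Cb, hCb0, hCb⟩ := Tmap_rinv N μ
  have hsum : (0:ℝ) ≤ ∑ j, K j := Finset.sum_nonneg fun j _ => (hKpos j).le
  set C₀ : ℝ := 2 * Cb * M * (∑ j, K j) + 1 with hC₀def
  have hC₀ : 0 < C₀ := by
    have : (0:ℝ) ≤ 2 * Cb * M * (∑ j, K j) :=
      mul_nonneg (mul_nonneg (by linarith) hM.le) hsum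
    linarith
  -- the uniform bound on ∫ S ρ for ρ = cos, sin
  have Sint : ∀ ρ : ℝ → ℝ, Continuous ρ →
      (∀ j (t : ℝ), |∫ s in (0:ℝ)..t, Real.cos (μ j * s) * ρ s| ≤ K j ∧
                    |∫ s in (0:ℝ)..t, Real.sin (μ j * s) * ρ s| ≤ K j) →
      ∀ ε ∈ Set.Ioc (0:ℝ) ε₀, ∀ t ≥ (0:ℝ), |∫ s in (0:ℝ)..t, S s ε * ρ s| ≤ C₀ := by
    intro ρ hρ hρK ε hε t ht
    set c : (Fin N → ℝ) × (Fin N → ℝ) := (fun j => α j ε, fun j => β j ε) with hcdef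
    obtain ⟨c', hc'eq, hc'le⟩ := hCb c
    have hTc : ∀ x : ↥(Set.Ici (0:ℝ)), Tmap N μ c x = S x ε := by
      intro x
      rw [Tmap_apply, hSdef]
    have hnorm : ‖Tmap N μ c‖ ≤ M := by
      apply (BoundedContinuousFunction.norm_le hM.le).2
      intro x
      rw [Real.norm_eq_abs, hTc x]
      exact hSbd x x.2 ε hε
    have hc'M : ‖c'‖ ≤ Cb * M := by
      calc ‖c'‖ ≤ Cb * ‖Tmap N μ c‖ := hc'le
      _ ≤ Cb * M := by
          rcases (lt_or_ge 0 Cb) with h | h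
          · exact mul_le_mul_of_nonneg_left hnorm h.le
          · have hCb0' : Cb = 0 := le_antisymm h hCb0
            simp [hCb0']
    have hcoef1 : ∀ j, |c'.1 j| ≤ Cb * M := by
      intro j
      calc |c'.1 j| = ‖c'.1 j‖ := rfl
      _ ≤ ‖c'.1‖ := norm_le_pi_norm c'.1 j
      _ ≤ ‖c'‖ := norm_fst_le c'
      _ ≤ Cb * M := hc'M
    have hcoef2 : ∀ j, |c'.2 j| ≤ Cb * M := by
      intro j
      calc |c'.2 j| = ‖c'.2 j‖ := rfl
      _ ≤ ‖c'.2‖ := norm_le_pi_norm c'.2 j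
      _ ≤ ‖c'‖ := norm_snd_le c'
      _ ≤ Cb * M := hc'M
    have hptid : ∀ s, 0 ≤ s →
        S s ε = ∑ j, (c'.1 j * Real.cos (μ j * s) + c'.2 j * Real.sin (μ j * s)) := by
      intro s hs
      have h1 := congrArg (fun f => f (⟨s, hs⟩ : ↥(Set.Ici (0:ℝ)))) hc'eq
      rw [Tmap_apply, Tmap_apply] at h1
      rw [hSdef]
      exact h1.symm
    have hint : ∫ s in (0:ℝ)..t, S s ε * ρ s
        = ∑ j, (c'.1 j * (∫ s in (0:ℝ)..t, Real.cos (μ j * s) * ρ s)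
              + c'.2 j * (∫ s in (0:ℝ)..t, Real.sin (μ j * s) * ρ s)) := by
      rw [intervalIntegral.integral_congr
        (g := fun s => ∑ j, (c'.1 j * (Real.cos (μ j * s) * ρ s)
                           + c'.2 j * (Real.sin (μ j * s) * ρ s)))
        (by
          intro s hs
          rw [Set.uIcc_of_le ht] at hs
          simp only
          rw [hptid s hs.1, Finset.sum_mul]
          exact Finset.sum_congr rfl fun j _ => by ring)]
      rw [intervalIntegral.integral_finset_sum (fun j _ => by
        apply ContinuousOn.intervalIntegrable
        apply Continuous.continuousOn
        fun_prop)]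
      refine Finset.sum_congr rfl fun j _ => ?_
      have hi1 : IntervalIntegrable (fun s => c'.1 j * (Real.cos (μ j * s) * ρ s))
          MeasureTheory.volume 0 t := by
        apply ContinuousOn.intervalIntegrable
        apply Continuous.continuousOn
        fun_prop
      have hi2 : IntervalIntegrable (fun s => c'.2 j * (Real.sin (μ j * s) * ρ s))
          MeasureTheory.volume 0 t := by
        apply ContinuousOn.intervalIntegrable
        apply Continuous.continuousOn
        fun_prop
      rw [intervalIntegral.integral_add hi1 hi2,
        intervalIntegral.integral_const_mul, intervalIntegral.integral_const_mul]
    rw [hint]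
    calc |∑ j, (c'.1 j * (∫ s in (0:ℝ)..t, Real.cos (μ j * s) * ρ s)
              + c'.2 j * (∫ s in (0:ℝ)..t, Real.sin (μ j * s) * ρ s))|
        ≤ ∑ j, |c'.1 j * (∫ s in (0:ℝ)..t, Real.cos (μ j * s) * ρ s)
              + c'.2 j * (∫ s in (0:ℝ)..t, Real.sin (μ j * s) * ρ s)| :=
          Finset.abs_sum_le_sum_abs _ _
      _ ≤ ∑ j, 2 * (Cb * M) * K j := by
          apply Finset.sum_le_sum
          intro j _
          have h1 : |c'.1 j * (∫ s in (0:ℝ)..t, Real.cos (μ j * s) * ρ s)| ≤ Cb * M * K j := by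
            rw [abs_mul]
            exact mul_le_mul (hcoef1 j) (hρK j t).1 (abs_nonneg _)
              (mul_nonneg hCb0 hM.le)
          have h2 : |c'.2 j * (∫ s in (0:ℝ)..t, Real.sin (μ j * s) * ρ s)| ≤ Cb * M * K j := by
            rw [abs_mul]
            exact mul_le_mul (hcoef2 j) (hρK j t).2 (abs_nonneg _)
              (mul_nonneg hCb0 hM.le)
          refine (abs_add_le _ _).trans ?_
          calc _ ≤ Cb * M * K j + Cb * M * K j := add_le_add h1 h2
          _ = 2 * (Cb * M) * K j := by ring
      _ = 2 * Cb * M * (∑ j, K j) := by rw [← Finset.mul_sum]; ring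
      _ ≤ C₀ := by rw [hC₀def]; linarith
  have SintCos : ∀ ε ∈ Set.Ioc (0:ℝ) ε₀, ∀ t ≥ (0:ℝ),
      |∫ s in (0:ℝ)..t, S s ε * Real.cos s| ≤ C₀ :=
    Sint Real.cos Real.continuous_cos (fun j t => ⟨(hK j t).1, (hK j t).2.1⟩)
  have SintSin : ∀ ε ∈ Set.Ioc (0:ℝ) ε₀, ∀ t ≥ (0:ℝ),
      |∫ s in (0:ℝ)..t, S s ε * Real.sin s| ≤ C₀ :=
    Sint Real.sin Real.continuous_sin (fun j t => ⟨(hK j t).2.2.1, (hK j t).2.2.2⟩)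
  clear Sint hK hCb
  -- constants
  set R : ℝ := 2 * C₀ + 2 with hRdef
  have hR : 0 < R := by linarith
  obtain ⟨k, hk0, hk⟩ := hglip R hR
  set G : ℝ := M + k * R with hGdef
  have hGpos : 0 < G := by nlinarith
  set γ : ℝ := 1 / (2 * (G + 1)) with hγdef
  have hγ : 0 < γ := by positivity
  have hγG : γ * G ≤ 1 / 2 := by
    rw [hγdef, div_mul_eq_mul_div, div_le_div_iff₀ (by positivity) (by norm_num)]
    nlinarith
  set C : ℝ := 5 * C₀ + M + ε₀ * G + R + 10 with hCdef
  have hCpos : 0 < C := by positivity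
  refine ⟨γ, hγ, C, hCpos, ε₀, ⟨hε₀, le_rfl⟩, ?_⟩
  intro ε hε
  simp only [dIci]
  set v : ℝ → ℝ := w ε with hvdef
  set v' : ℝ → ℝ := derivWithin v (Set.Ici 0) with hv'def
  set v'' : ℝ → ℝ := derivWithin v' (Set.Ici 0) with hv''def
  have hu : UniqueDiffOn ℝ (Set.Ici (0:ℝ)) := uniqueDiffOn_Ici 0
  have hv2 : ContDiffOn ℝ 2 v (Set.Ici 0) := hwreg ε hε
  have hv1 : DifferentiableOn ℝ v (Set.Ici 0) := hv2.differentiableOn (by norm_num)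
  have hv'1 : ContDiffOn ℝ 1 v' (Set.Ici 0) := hv2.derivWithin hu (by norm_num)
  have hv'diff : DifferentiableOn ℝ v' (Set.Ici 0) := hv'1.differentiableOn one_ne_zero
  have hv''cd : ContDiffOn ℝ 0 v'' (Set.Ici 0) := hv'1.derivWithin hu (by norm_num)
  have hv''cont : ContinuousOn v'' (Set.Ici 0) := hv''cd.continuousOn
  have hvcont : ContinuousOn v (Set.Ici 0) := hv2.continuousOn
  have hv'cont : ContinuousOn v' (Set.Ici 0) := hv'1.continuousOn
  have hD : ∀ t ∈ Set.Ici (0:ℝ), HasDerivWithinAt v (v' t) (Set.Ici 0) t :=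
    fun t ht => (hv1 t ht).hasDerivWithinAt
  have hD' : ∀ t ∈ Set.Ici (0:ℝ), HasDerivWithinAt v' (v'' t) (Set.Ici 0) t :=
    fun t ht => (hv'diff t ht).hasDerivWithinAt
  set F : ℝ → ℝ := fun s => S s ε + ε * g s (v s) ε with hFdef
  have hodev : ∀ t ≥ (0:ℝ), v'' t + v t = F t := fun t ht => hode ε hε t ht
  have hv0 : v 0 = 0 := hw0 ε hε
  have hv'0 : v' 0 = 0 := hw0' ε hε
  have hgv : ContinuousOn (fun s => g s (v s) ε) (Set.Ici 0) := by
    have hmap : Set.MapsTo (fun s => (s, v s, ε)) (Set.Ici (0:ℝ))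
        ((Set.Ici (0:ℝ)) ×ˢ ((Set.univ : Set ℝ) ×ˢ (Set.Ioc (0:ℝ) ε₀))) := by
      intro s hs
      exact ⟨hs, Set.mem_univ _, hε⟩
    exact hgcont.comp (continuousOn_id.prodMk (hvcont.prodMk continuousOn_const)) hmap
  have hScont : Continuous (fun s => S s ε) := by
    have : (fun s => S s ε)
        = fun s => ∑ j, (α j ε * Real.cos (μ j * s) + β j ε * Real.sin (μ j * s)) :=
      funext fun s => hSdef s ε
    rw [this]
    apply continuous_finset_sum
    intro j _
    fun_prop
  have hFcont : ContinuousOn F (Set.Ici 0) :=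
    (hScont.continuousOn).add (continuousOn_const.mul hgv)
  set P : ℝ → ℝ := fun t => v' t * Real.cos t + v t * Real.sin t with hPdef
  set Q : ℝ → ℝ := fun t => v' t * Real.sin t - v t * Real.cos t with hQdef
  have hPder : ∀ t ∈ Set.Ici (0:ℝ), HasDerivWithinAt P (F t * Real.cos t) (Set.Ici 0) t := by
    intro t ht
    have h1 := ((hD' t ht).mul ((Real.hasDerivAt_cos t).hasDerivWithinAt)).add
      ((hD t ht).mul ((Real.hasDerivAt_sin t).hasDerivWithinAt))
    have heq : v'' t * Real.cos t + v' t * -Real.sin t + (v' t * Real.sin t + v t * Real.cos t)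
        = F t * Real.cos t := by
      rw [← hodev t ht]; ring
    exact heq ▸ h1
  have hQder : ∀ t ∈ Set.Ici (0:ℝ), HasDerivWithinAt Q (F t * Real.sin t) (Set.Ici 0) t := by
    intro t ht
    have h1 := ((hD' t ht).mul ((Real.hasDerivAt_sin t).hasDerivWithinAt)).sub
      ((hD t ht).mul ((Real.hasDerivAt_cos t).hasDerivWithinAt))
    have heq : v'' t * Real.sin t + v' t * Real.cos t - (v' t * Real.cos t + v t * -Real.sin t)
        = F t * Real.sin t := by
      rw [← hodev t ht]; ring
    exact heq ▸ h1
  have hIccIci : ∀ t : ℝ, Set.Icc (0:ℝ) t ⊆ Set.Ici 0 := fun t => Set.Icc_subset_Ici_self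
  have hPint : ∀ t ≥ (0:ℝ), P t = ∫ s in (0:ℝ)..t, F s * Real.cos s := by
    intro t ht
    have hcP : ContinuousOn P (Set.Icc 0 t) :=
      ((hv'cont.mono (hIccIci t)).mul Real.continuous_cos.continuousOn).add
        ((hvcont.mono (hIccIci t)).mul Real.continuous_sin.continuousOn)
    have hder : ∀ x ∈ Set.Ioo (0:ℝ) t, HasDerivWithinAt P (F x * Real.cos x) (Set.Ioi x) x :=
      fun x hx => (hPder x hx.1.le).mono fun y hy => le_trans hx.1.le hy.le
    have hint : IntervalIntegrable (fun s => F s * Real.cos s) MeasureTheory.volume 0 t := by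
      apply ContinuousOn.intervalIntegrable
      rw [Set.uIcc_of_le ht]
      exact (hFcont.mono (hIccIci t)).mul Real.continuous_cos.continuousOn
    have := intervalIntegral.integral_eq_sub_of_hasDeriv_right_of_le ht hcP hder hint
    rw [this]
    simp [hPdef, hv0, hv'0]
  have hQint : ∀ t ≥ (0:ℝ), Q t = ∫ s in (0:ℝ)..t, F s * Real.sin s := by
    intro t ht
    have hcQ : ContinuousOn Q (Set.Icc 0 t) :=
      ((hv'cont.mono (hIccIci t)).mul Real.continuous_sin.continuousOn).sub
        ((hvcont.mono (hIccIci t)).mul Real.continuous_cos.continuousOn)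
    have hder : ∀ x ∈ Set.Ioo (0:ℝ) t, HasDerivWithinAt Q (F x * Real.sin x) (Set.Ioi x) x :=
      fun x hx => (hQder x hx.1.le).mono fun y hy => le_trans hx.1.le hy.le
    have hint : IntervalIntegrable (fun s => F s * Real.sin s) MeasureTheory.volume 0 t := by
      apply ContinuousOn.intervalIntegrable
      rw [Set.uIcc_of_le ht]
      exact (hFcont.mono (hIccIci t)).mul Real.continuous_sin.continuousOn
    have := intervalIntegral.integral_eq_sub_of_hasDeriv_right_of_le ht hcQ hder hint
    rw [this]
    simp [hQdef, hv0, hv'0]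
  have hrecov : ∀ t : ℝ, v t = P t * Real.sin t - Q t * Real.cos t
      ∧ v' t = P t * Real.cos t + Q t * Real.sin t := by
    intro t
    have hpyth := Real.sin_sq_add_cos_sq t
    constructor
    · simp only [hPdef, hQdef]
      linear_combination (-(v t)) * hpyth
    · simp only [hPdef, hQdef]
      linear_combination (-(v' t)) * hpyth
  -- bound on g along the solution
  have hgb : ∀ s ≥ (0:ℝ), |v s| ≤ R → |g s (v s) ε| ≤ G := by
    intro s hs hvs
    have h1 := hk s hs ε hε (v s) 0 hvs (by simp [hR.le])
    have h2 := hg0 s hs ε hε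
    have h3 : |g s (v s) ε| ≤ |g s (v s) ε - g s 0 ε| + |g s 0 ε| := by
      have := abs_sub_le (g s (v s) ε) (g s 0 ε) 0
      simpa using this
    have h4 : k * |v s - 0| ≤ k * R := by
      rw [sub_zero]
      exact mul_le_mul_of_nonneg_left hvs hk0.le
    rw [hGdef]
    linarith
  have hεpos : 0 < ε := hε.1
  have hεε₀ : ε ≤ ε₀ := hε.2
  set T₀ : ℝ := γ / ε with hT₀def
  -- core estimate
  have hPQ : ∀ t ∈ Set.Icc (0:ℝ) T₀, (∀ s ∈ Set.Icc (0:ℝ) t, |v s| ≤ R) →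
      |P t| ≤ C₀ + 1/2 ∧ |Q t| ≤ C₀ + 1/2 := by
    intro t ht hvR
    have ht0 : (0:ℝ) ≤ t := ht.1
    have hεt : ε * t ≤ γ := by
      rw [hT₀def] at ht
      have := ht.2
      calc ε * t ≤ ε * (γ / ε) := mul_le_mul_of_nonneg_left this hεpos.le
      _ = γ := by field_simp
    have hsplit : ∀ ρ : ℝ → ℝ, Continuous ρ → (∀ x, |ρ x| ≤ 1) →
        (∀ t' ≥ (0:ℝ), |∫ s in (0:ℝ)..t', S s ε * ρ s| ≤ C₀) →
        |∫ s in (0:ℝ)..t, F s * ρ s| ≤ C₀ + 1/2 := by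
      intro ρ hρc hρ1 hSρ
      have h1 : IntervalIntegrable (fun s => S s ε * ρ s) MeasureTheory.volume 0 t :=
        (hScont.mul hρc).intervalIntegrable 0 t
      have h2 : IntervalIntegrable (fun s => ε * g s (v s) ε * ρ s) MeasureTheory.volume 0 t := by
        apply ContinuousOn.intervalIntegrable
        rw [Set.uIcc_of_le ht0]
        exact ((continuousOn_const.mul (hgv.mono (hIccIci t))).mul hρc.continuousOn)
      have heq : ∫ s in (0:ℝ)..t, F s * ρ s
          = (∫ s in (0:ℝ)..t, S s ε * ρ s) + ∫ s in (0:ℝ)..t, ε * g s (v s) ε * ρ s := by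
        rw [← intervalIntegral.integral_add h1 h2]
        apply intervalIntegral.integral_congr
        intro s _
        simp only [hFdef]
        ring
      have hgbd : |∫ s in (0:ℝ)..t, ε * g s (v s) ε * ρ s| ≤ ε * G * t := by
        have := intervalIntegral.norm_integral_le_of_norm_le_const
          (C := ε * G) (f := fun s => ε * g s (v s) ε * ρ s) (a := 0) (b := t) ?_
        · rw [Real.norm_eq_abs] at this
          calc |∫ s in (0:ℝ)..t, ε * g s (v s) ε * ρ s| ≤ ε * G * |t - 0| := this
          _ = ε * G * t := by rw [sub_zero, abs_of_nonneg ht0]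
        · intro x hx
          rw [Set.uIoc_of_le ht0] at hx
          have hx0 : (0:ℝ) ≤ x := hx.1.le
          have hvx : |v x| ≤ R := hvR x ⟨hx0, hx.2⟩
          rw [Real.norm_eq_abs, abs_mul, abs_mul, abs_of_pos hεpos]
          calc ε * |g x (v x) ε| * |ρ x| ≤ ε * G * 1 := by
                apply mul_le_mul _ (hρ1 x) (abs_nonneg _) (by positivity)
                exact mul_le_mul_of_nonneg_left (hgb x hx0 hvx) hεpos.le
          _ = ε * G := by ring
      have hεGt : ε * G * t ≤ 1/2 := by
        calc ε * G * t = (ε * t) * G := by ring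
        _ ≤ γ * G := mul_le_mul_of_nonneg_right hεt hGpos.le
        _ ≤ 1/2 := hγG
      rw [heq]
      calc |(∫ s in (0:ℝ)..t, S s ε * ρ s) + ∫ s in (0:ℝ)..t, ε * g s (v s) ε * ρ s|
          ≤ |∫ s in (0:ℝ)..t, S s ε * ρ s| + |∫ s in (0:ℝ)..t, ε * g s (v s) ε * ρ s| :=
            abs_add_le _ _
      _ ≤ C₀ + 1/2 := add_le_add (hSρ t ht0) (hgbd.trans hεGt)
    constructor
    · rw [hPint t ht0]
      exact hsplit Real.cos Real.continuous_cos Real.abs_cos_le_one (SintCos ε hε)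
    · rw [hQint t ht0]
      exact hsplit Real.sin Real.continuous_sin Real.abs_sin_le_one (SintSin ε hε)
  -- bound |v| via P Q whenever bootstrap hypothesis holds
  have hvb : ∀ t ∈ Set.Icc (0:ℝ) T₀, (∀ s ∈ Set.Icc (0:ℝ) t, |v s| ≤ R) →
      |v t| ≤ 2 * C₀ + 1 := by
    intro t ht hvR
    obtain ⟨hP, hQ⟩ := hPQ t ht hvR
    have := (hrecov t).1
    rw [this]
    have h1 : |P t * Real.sin t| ≤ C₀ + 1/2 := by
      rw [abs_mul]
      calc |P t| * |Real.sin t| ≤ (C₀ + 1/2) * 1 :=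
        mul_le_mul hP (Real.abs_sin_le_one t) (abs_nonneg _) (by linarith)
      _ = C₀ + 1/2 := by ring
    have h2 : |Q t * Real.cos t| ≤ C₀ + 1/2 := by
      rw [abs_mul]
      calc |Q t| * |Real.cos t| ≤ (C₀ + 1/2) * 1 :=
        mul_le_mul hQ (Real.abs_cos_le_one t) (abs_nonneg _) (by linarith)
      _ = C₀ + 1/2 := by ring
    have := abs_sub_le (P t * Real.sin t) 0 (Q t * Real.cos t)
    simp only [sub_zero, zero_sub, abs_neg] at this
    linarith
  -- bootstrap: |v| ≤ R on [0, T₀]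
  have hboot : ∀ t ∈ Set.Icc (0:ℝ) T₀, |v t| ≤ R := by
    by_contra hcon
    push_neg at hcon
    obtain ⟨t₁, ht₁, ht₁R⟩ := hcon
    set Bad : Set ℝ := {t | t ∈ Set.Icc (0:ℝ) T₀ ∧ R < |v t|} with hBaddef
    have hBadne : Bad.Nonempty := ⟨t₁, ht₁, ht₁R⟩
    have hBadbd : BddBelow Bad := ⟨0, fun x hx => hx.1.1⟩
    set τ := sInf Bad with hτdef
    have hτmem : τ ∈ Set.Icc (0:ℝ) T₀ := by
      constructor
      · exact le_csInf hBadne fun x hx => hx.1.1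
      · obtain ⟨b, hb⟩ := hBadne
        exact le_trans (csInf_le hBadbd hb) hb.1.2
    have hbelow : ∀ s, 0 ≤ s → s < τ → |v s| ≤ R := by
      intro s hs0 hsτ
      by_contra hsR
      push_neg at hsR
      have : s ∈ Bad := ⟨⟨hs0, le_trans hsτ.le hτmem.2⟩, hsR⟩
      exact absurd (csInf_le hBadbd this) (not_le.2 hsτ)
    have hτR : |v τ| ≤ R := by
      rcases eq_or_lt_of_le hτmem.1 with h0 | h0
      · rw [← h0]
        simp [hv0, hR.le]
      · -- τ > 0 : limit from the left
        have hne : (Set.Ico (0:ℝ) τ).Nonempty := ⟨0, le_rfl, h0⟩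
        have hclos : τ ∈ closure (Set.Ico (0:ℝ) τ) := by
          rw [closure_Ico (ne_of_lt h0)]
          exact ⟨h0.le, le_rfl⟩
        haveI : Filter.NeBot (nhdsWithin τ (Set.Ico (0:ℝ) τ)) :=
          mem_closure_iff_nhdsWithin_neBot.1 hclos
        have htend : Filter.Tendsto v (nhdsWithin τ (Set.Ico (0:ℝ) τ)) (nhds (v τ)) :=
          ((hvcont τ (le_of_lt h0)).mono Set.Ico_subset_Ici_self).tendsto
        have habs : Filter.Tendsto (fun s => |v s|) (nhdsWithin τ (Set.Ico (0:ℝ) τ))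
            (nhds (|v τ|)) := htend.abs
        apply le_of_tendsto habs
        filter_upwards [self_mem_nhdsWithin] with s hs
        exact hbelow s hs.1 hs.2
    have hAll : ∀ s ∈ Set.Icc (0:ℝ) τ, |v s| ≤ R := by
      intro s hs
      rcases lt_or_eq_of_le hs.2 with h | h
      · exact hbelow s hs.1 h
      · rw [h]; exact hτR
    have hτsmall : |v τ| ≤ 2 * C₀ + 1 := hvb τ hτmem hAll
    -- continuity beyond τ gives contradiction with sInf
    have hcontτ : ContinuousWithinAt v (Set.Ici 0) τ := hvcont τ hτmem.1
    rw [Metric.continuousWithinAt_iff] at hcontτ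
    obtain ⟨δ, hδ0, hδ⟩ := hcontτ (1/2) (by norm_num)
    obtain ⟨b, hbBad, hbδ⟩ := (csInf_lt_iff hBadbd hBadne).1
      (show sInf Bad < τ + δ by rw [← hτdef]; linarith)
    have hbτ : τ ≤ b := csInf_le hBadbd hbBad
    have hbdist : dist b τ < δ := by
      rw [Real.dist_eq, abs_of_nonneg (by linarith)]
      linarith
    have hb0 : b ∈ Set.Ici (0:ℝ) := le_trans hτmem.1 hbτ
    have := hδ hb0 hbdist
    rw [Real.dist_eq] at this
    have hvb' : |v b| ≤ |v τ| + 1/2 := by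
      have h2 := abs_sub_le (v b) (v τ) 0
      simp only [sub_zero] at h2
      have h3 := abs_sub_abs_le_abs_sub (v b) (v τ)
      linarith
    have : |v b| < R := by
      rw [hRdef] at *
      linarith [hbBad.2]
    linarith [hbBad.2]
  -- final estimates
  intro t ht
  have ht0 : (0:ℝ) ≤ t := ht.1
  have htIcc : t ∈ Set.Icc (0:ℝ) T₀ := ht
  have hAll : ∀ s ∈ Set.Icc (0:ℝ) t, |v s| ≤ R :=
    fun s hs => hboot s ⟨hs.1, le_trans hs.2 htIcc.2⟩
  obtain ⟨hP, hQ⟩ := hPQ t htIcc hAll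
  have hvt : |v t| ≤ 2 * C₀ + 1 := hvb t htIcc hAll
  have hv't : |v' t| ≤ 2 * C₀ + 1 := by
    have := (hrecov t).2
    rw [this]
    have h1 : |P t * Real.cos t| ≤ C₀ + 1/2 := by
      rw [abs_mul]
      calc |P t| * |Real.cos t| ≤ (C₀ + 1/2) * 1 :=
        mul_le_mul hP (Real.abs_cos_le_one t) (abs_nonneg _) (by linarith)
      _ = C₀ + 1/2 := by ring
    have h2 : |Q t * Real.sin t| ≤ C₀ + 1/2 := by
      rw [abs_mul]
      calc |Q t| * |Real.sin t| ≤ (C₀ + 1/2) * 1 :=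
        mul_le_mul hQ (Real.abs_sin_le_one t) (abs_nonneg _) (by linarith)
      _ = C₀ + 1/2 := by ring
    calc |P t * Real.cos t + Q t * Real.sin t| ≤ _ + _ := abs_add_le _ _
    _ ≤ 2 * C₀ + 1 := by linarith
  have hv''t : |v'' t| ≤ M + ε₀ * G + R := by
    have hF : v'' t = F t - v t := by
      have := hodev t ht0
      linarith
    rw [hF]
    have hvtR : |v t| ≤ R := hboot t htIcc
    have hSb : |S t ε| ≤ M := hSbd t ht0 ε hε
    have hgt : |g t (v t) ε| ≤ G := hgb t ht0 hvtR
    have hFb : |F t| ≤ M + ε₀ * G := by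
      have h1 : |ε * g t (v t) ε| ≤ ε₀ * G := by
        rw [abs_mul, abs_of_pos hεpos]
        exact mul_le_mul hεε₀ hgt (abs_nonneg _) hε₀.le
      have h2 : |F t| ≤ |S t ε| + |ε * g t (v t) ε| := by
        simp only [hFdef]
        exact abs_add_le _ _
      linarith
    have := abs_sub_le (F t) 0 (v t)
    simp only [sub_zero, zero_sub, abs_neg] at this
    linarith
  linarith
end

section
/- Let N ≥ 1, ω > 0 and ω₁,…,ω_N > 0 with ω₁ = ω, and suppose ω_k/ω ∉ ℤ for every k ≥ 2. Let M > 0, ε₀ > 0. For k = 1,…,N let S_k(t) = Σ_{m=0}^{M₀} (α_{k,m} cos(m t) + β_{k,m} sin(m t)) be trigonometric polynomials with nonnegative integer frequencies satisfying |S_k(t)| ≤ M for all t, and with α_{1,1} = β_{1,1} = 0 (S₁ has no component at frequency 1). Let g_k : [0,∞) × ℝ^N × (0,ε₀] → ℝ be continuous with |g_k(t,0,ε)| ≤ M and such that for every R > 0 there is k_R with |g_k(t,u,ε) − g_k(t,v,ε)| ≤ k_R ‖u − v‖ whenever ‖u‖, ‖v‖ ≤ R, uniformly in t and ε. If v_ε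 = (v₁,…,v_N) ∈ C²([0,∞); ℝ^N) solves ω² v_k'' + ω_k² v_k = S_k(t) + ε g_k(t, v_ε) with v_k(0) = 0, v_k'(0) = 0 for all k, then there exist γ > 0, C > 0 and ε₁ ∈ (0,ε₀] such that for all ε ∈ (0,ε₁] and all t ∈ [0, γ/ε], Σ_{k=1}^N (|v_k(t)| + |v_k'(t)| + |v_k''(t)|) ≤ C. -/
open Real Set Finset


noncomputable def trigP (s : Finset ℕ) (c d f : ℕ → ℝ) (t : ℝ) : ℝ :=
  ∑ m ∈ s, (c m * Real.cos (f m * t) + d m * Real.sin (f m * t))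

lemma trigP_hasDerivAt (s : Finset ℕ) (c d f : ℕ → ℝ) (t : ℝ) :
    HasDerivAt (trigP s c d f)
      (trigP s (fun m => d m * f m) (fun m => -(c m * f m)) f t) t := by
  unfold trigP
  apply HasDerivAt.fun_sum
  intro m _
  have hm : HasDerivAt (fun t : ℝ => f m * t) (f m) t := by
    simpa using (hasDerivAt_id t).const_mul (f m)
  have h1 : HasDerivAt (fun t : ℝ => c m * Real.cos (f m * t))
      (c m * (-Real.sin (f m * t) * f m)) t := (hm.cos).const_mul _
  have h2 : HasDerivAt (fun t : ℝ => d m * Real.sin (f m * t))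
      (d m * (Real.cos (f m * t) * f m)) t := (hm.sin).const_mul _
  convert h1.add h2 using 1
  · rfl
  ring

lemma trigP_bound (s : Finset ℕ) (c d f : ℕ → ℝ) (t : ℝ) :
    |trigP s c d f t| ≤ ∑ m ∈ s, (|c m| + |d m|) := by
  refine (Finset.abs_sum_le_sum_abs _ _).trans (Finset.sum_le_sum fun m _ => ?_)
  calc |c m * Real.cos (f m * t) + d m * Real.sin (f m * t)|
      ≤ |c m * Real.cos (f m * t)| + |d m * Real.sin (f m * t)| := abs_add_le _ _
    _ ≤ |c m| * 1 + |d m| * 1 := by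
        rw [abs_mul, abs_mul]
        gcongr <;> [exact Real.abs_cos_le_one _; exact Real.abs_sin_le_one _]
    _ = |c m| + |d m| := by ring

lemma trigP_zero (s : Finset ℕ) (c d f : ℕ → ℝ) :
    trigP s c d f 0 = ∑ m ∈ s, c m := by
  unfold trigP; simp

noncomputable def auxA (ωk ω : ℝ) (αk : ℕ → ℝ) (m : ℕ) : ℝ :=
  if ωk^2 - (m:ℝ)^2*ω^2 = 0 then 0 else αk m / (ωk^2 - (m:ℝ)^2*ω^2)

noncomputable def auxcc (M₀ : ℕ) (ωk ω : ℝ) (αk : ℕ → ℝ) (m : ℕ) : ℝ :=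
  if m ≤ M₀ then auxA ωk ω αk m else -(∑ j ∈ Finset.range (M₀+1), auxA ωk ω αk j)

noncomputable def auxdd (M₀ : ℕ) (ωk ω : ℝ) (βk : ℕ → ℝ) (m : ℕ) : ℝ :=
  if m ≤ M₀ then auxA ωk ω βk m
  else -(∑ j ∈ Finset.range (M₀+1), auxA ωk ω βk j * (j:ℝ)) * (ω/ωk)

noncomputable def auxff (M₀ : ℕ) (ωk ω : ℝ) (m : ℕ) : ℝ :=
  if m ≤ M₀ then (m:ℝ) else ωk/ω

noncomputable def auxT (M₀ : ℕ) (ωk ω : ℝ) (αk βk : ℕ → ℝ) : ℝ → ℝ :=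
  trigP (Finset.range (M₀+2)) (auxcc M₀ ωk ω αk) (auxdd M₀ ωk ω βk) (auxff M₀ ωk ω)

noncomputable def auxT1 (M₀ : ℕ) (ωk ω : ℝ) (αk βk : ℕ → ℝ) : ℝ → ℝ :=
  trigP (Finset.range (M₀+2)) (fun m => auxdd M₀ ωk ω βk m * auxff M₀ ωk ω m)
    (fun m => -(auxcc M₀ ωk ω αk m * auxff M₀ ωk ω m)) (auxff M₀ ωk ω)

noncomputable def auxT2 (M₀ : ℕ) (ωk ω : ℝ) (αk βk : ℕ → ℝ) : ℝ → ℝ :=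
  trigP (Finset.range (M₀+2))
    (fun m => -(auxcc M₀ ωk ω αk m * auxff M₀ ωk ω m) * auxff M₀ ωk ω m)
    (fun m => -(auxdd M₀ ωk ω βk m * auxff M₀ ωk ω m * auxff M₀ ωk ω m)) (auxff M₀ ωk ω)

lemma auxT_hasDerivAt (M₀ : ℕ) (ωk ω : ℝ) (αk βk : ℕ → ℝ) (t : ℝ) :
    HasDerivAt (auxT M₀ ωk ω αk βk) (auxT1 M₀ ωk ω αk βk t) t :=
  trigP_hasDerivAt _ _ _ _ _

lemma auxT1_hasDerivAt (M₀ : ℕ) (ωk ω : ℝ) (αk βk : ℕ → ℝ) (t : ℝ) :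
    HasDerivAt (auxT1 M₀ ωk ω αk βk) (auxT2 M₀ ωk ω αk βk t) t :=
  trigP_hasDerivAt _ _ _ _ _

lemma auxT_zero (M₀ : ℕ) (ωk ω : ℝ) (αk βk : ℕ → ℝ) :
    auxT M₀ ωk ω αk βk 0 = 0 := by
  unfold auxT
  rw [trigP_zero, Finset.sum_range_succ]
  have h : ∀ m ∈ Finset.range (M₀+1), auxcc M₀ ωk ω αk m = auxA ωk ω αk m := by
    intro m hm
    simp [auxcc, Nat.lt_succ_iff.mp (Finset.mem_range.mp hm)]
  rw [Finset.sum_congr rfl h]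
  simp [auxcc]

lemma auxT1_zero (M₀ : ℕ) (ωk ω : ℝ) (αk βk : ℕ → ℝ) (hω : ω ≠ 0) (hωk : ωk ≠ 0) :
    auxT1 M₀ ωk ω αk βk 0 = 0 := by
  unfold auxT1
  rw [trigP_zero, Finset.sum_range_succ]
  have h : ∀ m ∈ Finset.range (M₀+1),
      auxdd M₀ ωk ω βk m * auxff M₀ ωk ω m = auxA ωk ω βk m * (m:ℝ) := by
    intro m hm
    simp [auxdd, auxff, Nat.lt_succ_iff.mp (Finset.mem_range.mp hm)]
  rw [Finset.sum_congr rfl h]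
  simp only [auxdd, auxff, Nat.lt_irrefl, if_neg (by omega : ¬ (M₀+1 ≤ M₀))]
  field_simp
  ring

lemma auxT_ode (M₀ : ℕ) (ωk ω : ℝ) (αk βk : ℕ → ℝ) (hω : ω ≠ 0) (hωk : ωk ≠ 0)
    (hres : ∀ m : ℕ, ωk^2 - (m:ℝ)^2 * ω^2 = 0 → αk m = 0 ∧ βk m = 0) (t : ℝ) :
    ω^2 * auxT2 M₀ ωk ω αk βk t + ωk^2 * auxT M₀ ωk ω αk βk t
      = ∑ m ∈ Finset.range (M₀+1), (αk m * Real.cos ((m:ℝ)*t) + βk m * Real.sin ((m:ℝ)*t)) := by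
  unfold auxT2 auxT trigP
  rw [Finset.mul_sum, Finset.mul_sum, ← Finset.sum_add_distrib, Finset.sum_range_succ]
  have hlast : ω^2 * (-(auxcc M₀ ωk ω αk (M₀+1) * auxff M₀ ωk ω (M₀+1)) * auxff M₀ ωk ω (M₀+1)
        * Real.cos (auxff M₀ ωk ω (M₀+1) * t)
      + -(auxdd M₀ ωk ω βk (M₀+1) * auxff M₀ ωk ω (M₀+1) * auxff M₀ ωk ω (M₀+1))
        * Real.sin (auxff M₀ ωk ω (M₀+1) * t))
      + ωk^2 * (auxcc M₀ ωk ω αk (M₀+1) * Real.cos (auxff M₀ ωk ω (M₀+1) * t)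
        + auxdd M₀ ωk ω βk (M₀+1) * Real.sin (auxff M₀ ωk ω (M₀+1) * t)) = 0 := by
    simp only [auxff, if_neg (by omega : ¬ (M₀+1 ≤ M₀))]
    field_simp
    ring
  rw [hlast, add_zero]
  apply Finset.sum_congr rfl
  intro m hm
  have hm' : m ≤ M₀ := Nat.lt_succ_iff.mp (Finset.mem_range.mp hm)
  simp only [auxcc, auxdd, auxff, if_pos hm']
  have hA : (ωk^2 - (m:ℝ)^2*ω^2) * auxA ωk ω αk m = αk m := by
    unfold auxA
    split_ifs with h
    · rw [(hres m h).1]; ring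
    · field_simp
  have hB : (ωk^2 - (m:ℝ)^2*ω^2) * auxA ωk ω βk m = βk m := by
    unfold auxA
    split_ifs with h
    · rw [(hres m h).2]; ring
    · field_simp
  linear_combination Real.cos ((m:ℝ)*t) * hA + Real.sin ((m:ℝ)*t) * hB

noncomputable def auxCT (M₀ : ℕ) (ωk ω : ℝ) (αk βk : ℕ → ℝ) : ℝ :=
  ∑ m ∈ Finset.range (M₀+2),
    (|auxcc M₀ ωk ω αk m| + |auxdd M₀ ωk ω βk m|) * (1 + |auxff M₀ ωk ω m|)^2

lemma auxCT_nonneg (M₀ : ℕ) (ωk ω : ℝ) (αk βk : ℕ → ℝ) : 0 ≤ auxCT M₀ ωk ω αk βk :=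
  Finset.sum_nonneg fun m _ => by positivity

lemma auxT_bound (M₀ : ℕ) (ωk ω : ℝ) (αk βk : ℕ → ℝ) (t : ℝ) :
    |auxT M₀ ωk ω αk βk t| ≤ auxCT M₀ ωk ω αk βk := by
  refine (trigP_bound _ _ _ _ _).trans (Finset.sum_le_sum fun m _ => ?_)
  have h1 := abs_nonneg (auxcc M₀ ωk ω αk m)
  have h2 := abs_nonneg (auxdd M₀ ωk ω βk m)
  have h3 := abs_nonneg (auxff M₀ ωk ω m)
  nlinarith [mul_nonneg (add_nonneg h1 h2) h3,
    mul_nonneg (mul_nonneg (add_nonneg h1 h2) h3) h3]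

lemma auxT1_bound (M₀ : ℕ) (ωk ω : ℝ) (αk βk : ℕ → ℝ) (t : ℝ) :
    |auxT1 M₀ ωk ω αk βk t| ≤ auxCT M₀ ωk ω αk βk := by
  refine (trigP_bound _ _ _ _ _).trans (Finset.sum_le_sum fun m _ => ?_)
  simp only [abs_neg, abs_mul]
  have h1 := abs_nonneg (auxcc M₀ ωk ω αk m)
  have h2 := abs_nonneg (auxdd M₀ ωk ω βk m)
  have h3 := abs_nonneg (auxff M₀ ωk ω m)
  nlinarith [mul_nonneg (add_nonneg h1 h2) h3,
    mul_nonneg (mul_nonneg (add_nonneg h1 h2) h3) h3]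

lemma auxT2_bound (M₀ : ℕ) (ωk ω : ℝ) (αk βk : ℕ → ℝ) (t : ℝ) :
    |auxT2 M₀ ωk ω αk βk t| ≤ auxCT M₀ ωk ω αk βk := by
  refine (trigP_bound _ _ _ _ _).trans (Finset.sum_le_sum fun m _ => ?_)
  simp only [abs_neg, abs_mul]
  have h1 := abs_nonneg (auxcc M₀ ωk ω αk m)
  have h2 := abs_nonneg (auxdd M₀ ωk ω βk m)
  have h3 := abs_nonneg (auxff M₀ ωk ω m)
  nlinarith [mul_nonneg (add_nonneg h1 h2) h3,
    mul_nonneg (mul_nonneg (add_nonneg h1 h2) h3) h3]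

lemma abs_le_of_sq_le_sq'' {x c : ℝ} (hc : 0 ≤ c) (h : x^2 ≤ c^2) : |x| ≤ c := by
  nlinarith [sq_abs x, abs_nonneg x]

lemma bound_aux {ω a b E G : ℝ} (hω : 0 < ω) (hE : ω^2*a^2 ≤ E) (hbG : |b| ≤ G) :
    2*( |b| * |a| ) ≤ |E| + G^2/ω^2 := by
  have hω2 : (0:ℝ) < ω^2 := by positivity
  have hEabs : E ≤ |E| := le_abs_self E
  have h1 : 2*( |b| * |a| )*ω^2 ≤ ω^2 * |a|^2 * ω^2 + |b|^2 := by
    nlinarith [sq_nonneg (ω^2 * |a| - |b|)]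
  rw [sq_abs, sq_abs] at h1
  have h2 : b^2 ≤ G^2 := by nlinarith [abs_nonneg b, sq_abs b]
  have h3 : ω^2*a^2*ω^2 ≤ |E| * ω^2 := by nlinarith
  have h4 : (G^2/ω^2)*ω^2 = G^2 := by field_simp
  have h5 : 2*( |b| * |a| )*ω^2 ≤ (|E| + G^2/ω^2)*ω^2 := by nlinarith
  exact le_of_mul_le_mul_right h5 hω2

lemma wsq_aux {ωk ω₀ Y : ℝ} (h1 : ω₀ ≤ ωk) (h0 : 0 < ω₀) (hE : ωk^2 * Y ≤ ω₀^2/4)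
    (hY : 0 ≤ Y) : Y ≤ 1/4 := by
  nlinarith [mul_nonneg (mul_nonneg (sub_nonneg.mpr h1) hY) (by linarith : (0:ℝ) ≤ ωk + ω₀),
    mul_pos h0 h0]



set_option maxHeartbeats 1000000 in
/-- System version of the technical remainder lemma: `ω² v_k'' + ω_k² v_k = S_k + ε g_k(t,v)`
with zero data, integer-frequency trigonometric forcings, no frequency-1 component in the
first (resonant) equation, `ω_k/ω ∉ ℤ` for `k ≥ 2`, and locally Lipschitz `g`; the solution
is bounded in `C²` on `[0, γ/ε]`. -/
theorem stmt_3 (N : ℕ) (hN : 0 < N) (ω : ℝ) (hω : 0 < ω)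
    (ωs : Fin N → ℝ) (hωs : ∀ k, 0 < ωs k) (hω1 : ωs ⟨0, hN⟩ = ω)
    (hres : ∀ k : Fin N, 0 < (k : ℕ) → ∀ z : ℤ, ωs k / ω ≠ (z : ℝ))
    (M εmax : ℝ) (hM : 0 < M) (hεmax : 0 < εmax)
    (M₀ : ℕ) (α β : Fin N → ℕ → ℝ)
    (S : Fin N → ℝ → ℝ)
    (hSdef : ∀ k t, S k t = ∑ m ∈ Finset.range (M₀ + 1),
        (α k m * Real.cos (m * t) + β k m * Real.sin (m * t)))
    (hS1α : α ⟨0, hN⟩ 1 = 0) (hS1β : β ⟨0, hN⟩ 1 = 0)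
    (hSbd : ∀ k, ∀ t : ℝ, |S k t| ≤ M)
    (g : Fin N → ℝ → (Fin N → ℝ) → ℝ → ℝ)
    (hgcont : ∀ k, ContinuousOn (fun q : ℝ × (Fin N → ℝ) × ℝ => g k q.1 q.2.1 q.2.2)
        ((Set.Ici (0:ℝ)) ×ˢ ((Set.univ : Set (Fin N → ℝ)) ×ˢ (Set.Ioc (0:ℝ) εmax))))
    (hg0 : ∀ k, ∀ t ≥ (0:ℝ), ∀ ε ∈ Set.Ioc (0:ℝ) εmax, |g k t 0 ε| ≤ M)
    (hglip : ∀ R > (0:ℝ), ∃ kR > (0:ℝ), ∀ k, ∀ t ≥ (0:ℝ), ∀ ε ∈ Set.Ioc (0:ℝ) εmax,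
        ∀ u v : Fin N → ℝ, ‖u‖ ≤ R → ‖v‖ ≤ R →
          |g k t u ε - g k t v ε| ≤ kR * ‖u - v‖)
    (v : ℝ → Fin N → ℝ → ℝ)
    (hvreg : ∀ ε ∈ Set.Ioc (0:ℝ) εmax, ∀ k, ContDiffOn ℝ 2 (v ε k) (Set.Ici 0))
    (hode : ∀ ε ∈ Set.Ioc (0:ℝ) εmax, ∀ k, ∀ t ≥ (0:ℝ),
        ω^2 * dIci (dIci (v ε k)) t + (ωs k)^2 * v ε k t
          = S k t + ε * g k t (fun j => v ε j t) ε)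
    (hv0 : ∀ ε ∈ Set.Ioc (0:ℝ) εmax, ∀ k, v ε k 0 = 0)
    (hv0' : ∀ ε ∈ Set.Ioc (0:ℝ) εmax, ∀ k, dIci (v ε k) 0 = 0) :
    ∃ γ > (0:ℝ), ∃ C > (0:ℝ), ∃ ε₁ ∈ Set.Ioc (0:ℝ) εmax, ∀ ε ∈ Set.Ioc (0:ℝ) ε₁,
      ∀ t ∈ Set.Icc (0:ℝ) (γ / ε),
        ∑ k, (|v ε k t| + |dIci (v ε k) t| + |dIci (dIci (v ε k)) t|) ≤ C := by
  have hωne : ω ≠ 0 := ne_of_gt hω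
  obtain ⟨kmin, -, hkmin⟩ := Finset.exists_min_image Finset.univ ωs ⟨⟨0,hN⟩, Finset.mem_univ _⟩
  set ω₀ := ωs kmin with hw0def
  have hω₀ : 0 < ω₀ := hωs kmin
  have hω₀le : ∀ k, ω₀ ≤ ωs k := fun k => hkmin k (Finset.mem_univ k)
  -- nonresonance gives the key coefficient fact
  have hresk : ∀ (k : Fin N) (m : ℕ), (ωs k)^2 - (m:ℝ)^2*ω^2 = 0 → α k m = 0 ∧ β k m = 0 := by
    intro k m hm
    rcases Nat.eq_zero_or_pos (k:ℕ) with hk | hk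
    · have hkk : k = ⟨0, hN⟩ := Fin.ext (by simp [hk])
      subst hkk
      rw [hω1] at hm
      have hm1 : m = 1 := by
        have hω2 : (0:ℝ) < ω^2 := by positivity
        have hm2 : (m:ℝ)^2 = 1 := by nlinarith
        have hmn : (0:ℝ) ≤ (m:ℝ) := Nat.cast_nonneg m
        have h1 : (m:ℝ) = 1 := by nlinarith [sq_nonneg ((m:ℝ) - 1), sq_nonneg ((m:ℝ) + 1)]
        exact_mod_cast h1
      subst hm1
      exact ⟨hS1α, hS1β⟩
    · exfalso
      apply hres k hk (m : ℤ)
      have hm0 : (0:ℝ) < m := by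
        rcases Nat.eq_zero_or_pos m with h0 | h0
        · exfalso; subst h0; simp at hm; nlinarith [hωs k]
        · exact_mod_cast h0
      have heq : ωs k = (m:ℝ) * ω := by nlinarith [hωs k, mul_pos hm0 hω]
      rw [heq]
      push_cast
      field_simp
  -- the particular + homogeneous corrector
  set T : Fin N → ℝ → ℝ := fun k => auxT M₀ (ωs k) ω (α k) (β k) with hTdef
  set T1 : Fin N → ℝ → ℝ := fun k => auxT1 M₀ (ωs k) ω (α k) (β k) with hT1def
  set T2 : Fin N → ℝ → ℝ := fun k => auxT2 M₀ (ωs k) ω (α k) (β k) with hT2def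
  have hT : ∀ k t, HasDerivAt (T k) (T1 k t) t := fun k t => auxT_hasDerivAt _ _ _ _ _ _
  have hT1 : ∀ k t, HasDerivAt (T1 k) (T2 k t) t := fun k t => auxT1_hasDerivAt _ _ _ _ _ _
  have hT0 : ∀ k, T k 0 = 0 := fun k => auxT_zero _ _ _ _ _
  have hT10 : ∀ k, T1 k 0 = 0 := fun k => auxT1_zero _ _ _ _ _ hωne (ne_of_gt (hωs k))
  have hTode : ∀ k t, ω^2 * T2 k t + (ωs k)^2 * T k t = S k t := by
    intro k t
    rw [hSdef]
    exact auxT_ode M₀ (ωs k) ω (α k) (β k) hωne (ne_of_gt (hωs k)) (hresk k) t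
  have hTcont : ∀ k, Continuous (T k) := by
    intro k
    have hd : Differentiable ℝ (T k) := fun t => (hT k t).differentiableAt
    exact hd.continuous
  have hT1cont : ∀ k, Continuous (T1 k) := by
    intro k
    have hd : Differentiable ℝ (T1 k) := fun t => (hT1 k t).differentiableAt
    exact hd.continuous
  -- uniform bounds on the corrector
  set CTB : ℝ := ∑ k, auxCT M₀ (ωs k) ω (α k) (β k) with hCTBdef
  have hCTB0 : 0 ≤ CTB := Finset.sum_nonneg fun k _ => auxCT_nonneg _ _ _ _ _
  have hCTk : ∀ k : Fin N, auxCT M₀ (ωs k) ω (α k) (β k) ≤ CTB := fun k =>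
    Finset.single_le_sum (f := fun k => auxCT M₀ (ωs k) ω (α k) (β k))
      (fun i _ => auxCT_nonneg _ _ _ _ _) (Finset.mem_univ k)
  have hTb : ∀ k t, |T k t| ≤ CTB := fun k t => (auxT_bound _ _ _ _ _ _).trans (hCTk k)
  have hT1b : ∀ k t, |T1 k t| ≤ CTB := fun k t => (auxT1_bound _ _ _ _ _ _).trans (hCTk k)
  have hT2b : ∀ k t, |T2 k t| ≤ CTB := fun k t => (auxT2_bound _ _ _ _ _ _).trans (hCTk k)
  -- constants
  set R : ℝ := CTB + 1 with hRdef
  have hR : 0 < R := by rw [hRdef]; linarith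
  obtain ⟨kR, hkR, hlip⟩ := hglip R hR
  set G : ℝ := M + kR * R with hGdef
  have hG : 0 < G := by rw [hGdef]; nlinarith
  have hgbd : ∀ (k : Fin N) (t : ℝ), 0 ≤ t → ∀ ε ∈ Set.Ioc (0:ℝ) εmax,
      ∀ u : Fin N → ℝ, ‖u‖ ≤ R → |g k t u ε| ≤ G := by
    intro k t ht ε hε u hu
    have h1 := hlip k t ht ε hε u 0 hu (by simp; linarith)
    have h2 := hg0 k t ht ε hε
    have h3 : ‖u - 0‖ ≤ R := by simpa using hu
    calc |g k t u ε| = |(g k t u ε - g k t 0 ε) + g k t 0 ε| := by congr 1; ring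
      _ ≤ |g k t u ε - g k t 0 ε| + |g k t 0 ε| := abs_add_le _ _
      _ ≤ kR * ‖u - 0‖ + M := add_le_add h1 h2
      _ ≤ kR * R + M := by nlinarith
      _ = G := by rw [hGdef]; ring
  set γ : ℝ := min 1 (ω₀^2 * ω^2 / (12 * G^2)) with hγdef
  have hγ : 0 < γ := lt_min one_pos (by positivity)
  have hγ1 : γ ≤ 1 := min_le_left _ _
  have hEB : G^2/ω^2 * (Real.exp γ - 1) ≤ ω₀^2/4 := by
    have e1 := Real.add_one_le_exp (-γ)
    have e2 : Real.exp γ ≤ Real.exp 1 := Real.exp_le_exp.mpr hγ1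
    have e3 : Real.exp 1 < 2.7182818286 := Real.exp_one_lt_d9
    have e4 : (0:ℝ) < Real.exp γ := Real.exp_pos γ
    have e5 : Real.exp (-γ) * Real.exp γ = 1 := by rw [← Real.exp_add]; simp
    have e6 : (1 - γ) * Real.exp γ ≤ 1 := by nlinarith
    have h1 : Real.exp γ - 1 ≤ 3*γ := by nlinarith
    have h2 : γ ≤ ω₀^2*ω^2/(12*G^2) := min_le_right _ _
    have hG2 : (0:ℝ) < G^2 := by positivity
    have hω2 : (0:ℝ) < ω^2 := by positivity
    calc G^2/ω^2 * (Real.exp γ - 1) ≤ G^2/ω^2 * (3*γ) :=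
          mul_le_mul_of_nonneg_left h1 (by positivity)
      _ ≤ G^2/ω^2 * (3*(ω₀^2*ω^2/(12*G^2))) :=
          mul_le_mul_of_nonneg_left (by linarith) (by positivity)
      _ = ω₀^2/4 := by field_simp; ring
  set C : ℝ := (∑ k, ((CTB + 1) + (CTB + ω₀/(2*ω))
      + (M + εmax*G + (ωs k)^2*(CTB+1))/ω^2)) + 1 with hCdef
  have hCpos : 0 < C := by
    have hs : (0:ℝ) ≤ ∑ k : Fin N, ((CTB + 1) + (CTB + ω₀/(2*ω))
        + (M + εmax*G + (ωs k)^2*(CTB+1))/ω^2) := by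
      refine Finset.sum_nonneg fun k _ => ?_
      have h1 : (0:ℝ) ≤ CTB + 1 := by linarith
      have h2 : (0:ℝ) ≤ ω₀/(2*ω) := by positivity
      have h3 : (0:ℝ) ≤ (M + εmax*G + (ωs k)^2*(CTB+1))/ω^2 := by
        apply div_nonneg _ (sq_nonneg ω)
        have h4 := sq_nonneg (ωs k)
        nlinarith
      linarith
    rw [hCdef]; linarith
  refine ⟨γ, hγ, C, hCpos, εmax, ⟨hεmax, le_rfl⟩, ?_⟩
  intro ε hεm t ht
  -- per-ε regularity
  have hu : UniqueDiffOn ℝ (Set.Ici (0:ℝ)) := uniqueDiffOn_Ici 0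
  have hC2 : ∀ k, ContDiffOn ℝ 2 (v ε k) (Set.Ici 0) := hvreg ε hεm
  have hder1 : ∀ k, ∀ x ∈ Set.Ici (0:ℝ), HasDerivWithinAt (v ε k) (dIci (v ε k) x) (Set.Ici 0) x :=
    fun k x hx => (((hC2 k).differentiableOn (by norm_num)) x hx).hasDerivWithinAt
  have hC1 : ∀ k, ContDiffOn ℝ 1 (dIci (v ε k)) (Set.Ici 0) := by
    intro k
    have h : ContDiffOn ℝ 1 (derivWithin (v ε k) (Set.Ici 0)) (Set.Ici 0) :=
      (hC2 k).derivWithin hu (by norm_num)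
    exact h
  have hder2 : ∀ k, ∀ x ∈ Set.Ici (0:ℝ),
      HasDerivWithinAt (dIci (v ε k)) (dIci (dIci (v ε k)) x) (Set.Ici 0) x :=
    fun k x hx => (((hC1 k).differentiableOn (by norm_num)) x hx).hasDerivWithinAt
  have hcont0 : ∀ k, ContinuousOn (v ε k) (Set.Ici 0) := fun k => (hC2 k).continuousOn
  have hcont1 : ∀ k, ContinuousOn (dIci (v ε k)) (Set.Ici 0) := fun k => (hC1 k).continuousOn
  have hodeε : ∀ k, ∀ x : ℝ, 0 ≤ x → ω^2 * dIci (dIci (v ε k)) x + (ωs k)^2 * v ε k x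
      = S k x + ε * g k x (fun j => v ε j x) ε := fun k x hx => hode ε hεm k x hx
  -- energy
  set EE : Fin N → ℝ → ℝ := fun k x =>
    ω^2*(dIci (v ε k) x - T1 k x)^2 + (ωs k)^2*(v ε k x - T k x)^2 with hEEdef
  have hE0 : ∀ k, EE k 0 = 0 := by
    intro k
    simp only [hEEdef, hv0 ε hεm k, hv0' ε hεm k, hT0 k, hT10 k]
    ring
  have hEcont : ∀ k, ContinuousOn (EE k) (Set.Ici 0) := by
    intro k
    simp only [hEEdef]
    exact (continuousOn_const.mul (((hcont1 k).sub ((hT1cont k).continuousOn)).pow 2)).add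
      (continuousOn_const.mul (((hcont0 k).sub ((hTcont k).continuousOn)).pow 2))
  have hE' : ∀ k, ∀ x ∈ Set.Ici (0:ℝ), HasDerivWithinAt (EE k)
      (2*ε*(g k x (fun j => v ε j x) ε)*(dIci (v ε k) x - T1 k x)) (Set.Ici 0) x := by
    intro k x hx
    have hw : HasDerivWithinAt (fun s => v ε k s - T k s)
        (dIci (v ε k) x - T1 k x) (Set.Ici 0) x :=
      (hder1 k x hx).sub ((hT k x).hasDerivWithinAt)
    have hw1 : HasDerivWithinAt (fun s => dIci (v ε k) s - T1 k s)
        (dIci (dIci (v ε k)) x - T2 k x) (Set.Ici 0) x :=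
      (hder2 k x hx).sub ((hT1 k x).hasDerivWithinAt)
    have h := ((hw1.pow 2).const_mul (ω^2)).add ((hw.pow 2).const_mul ((ωs k)^2))
    simp only [hEEdef]
    convert h using 1
    · rfl
    · rfl
    · rfl
    have h1 := hodeε k x hx
    have h2 := hTode k x
    push_cast
    linear_combination (2*(T1 k x - dIci (v ε k) x)) * h1 - (2*(T1 k x - dIci (v ε k) x)) * h2
  -- Gronwall under a prior bound
  have key : ∀ τ : ℝ, 0 ≤ τ → τ ≤ γ/ε → (∀ s ∈ Set.Icc (0:ℝ) τ, ∀ k, |v ε k s| ≤ R) →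
      ∀ s ∈ Set.Icc (0:ℝ) τ, ∀ k, EE k s ≤ ω₀^2/4 := by
    intro τ hτ0 hτγ hbd s hs k
    have hgb : ∀ x ∈ Set.Icc (0:ℝ) τ, |g k x (fun j => v ε j x) ε| ≤ G := by
      intro x hx
      apply hgbd k x hx.1 ε hεm
      rw [pi_norm_le_iff_of_nonneg hR.le]
      intro j
      simpa [Real.norm_eq_abs] using hbd x hx j
    have hbound : ∀ x ∈ Set.Ico (0:ℝ) τ,
        ‖2*ε*(g k x (fun j => v ε j x) ε)*(dIci (v ε k) x - T1 k x)‖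
          ≤ ε * ‖EE k x‖ + ε * (G^2/ω^2) := by
      intro x hx
      set w1 := dIci (v ε k) x - T1 k x with hw1def
      set gg := g k x (fun j => v ε j x) ε with hggdef
      have hgx : |gg| ≤ G := hgb x ⟨hx.1, hx.2.le⟩
      have e3 : ω^2*w1^2 ≤ EE k x := by
        simp only [hEEdef, ← hw1def]
        exact le_add_of_nonneg_right (by positivity)
      have hb := bound_aux (a := w1) (b := gg) (E := EE k x) (G := G) hω e3 hgx
      have habs : |2*ε*gg*w1| = ε*(2*( |gg| * |w1| )) := by
        rw [abs_mul, abs_mul, abs_mul, abs_two, abs_of_pos hεm.1]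
        ring
      rw [Real.norm_eq_abs, Real.norm_eq_abs, habs]
      calc ε*(2*( |gg| * |w1| )) ≤ ε*(|EE k x| + G^2/ω^2) :=
            mul_le_mul_of_nonneg_left hb hεm.1.le
        _ = ε*|EE k x| + ε*(G^2/ω^2) := by ring
    have hmain := norm_le_gronwallBound_of_norm_deriv_right_le (E := ℝ)
      (f := EE k)
      (f' := fun x => 2*ε*(g k x (fun j => v ε j x) ε)*(dIci (v ε k) x - T1 k x))
      (δ := 0) (K := ε) (ε := ε * (G^2/ω^2)) (a := 0) (b := τ)
      ((hEcont k).mono (fun x hx => hx.1))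
      (fun x hx => (hE' k x hx.1).mono (Set.Ici_subset_Ici.mpr hx.1))
      (by rw [hE0 k]; simp)
      hbound s hs
    have hKne : ε ≠ 0 := ne_of_gt hεm.1
    rw [gronwallBound_of_K_ne_0 hKne] at hmain
    simp only [Real.norm_eq_abs] at hmain
    have hεγ : ε*(s-0) ≤ γ := by
      have h1 : s ≤ τ := hs.2
      have h2 : ε * τ ≤ γ := by
        rw [← (by field_simp : ε * (γ/ε) = γ)]
        exact mul_le_mul_of_nonneg_left hτγ hεm.1.le
      have h3 := mul_le_mul_of_nonneg_left h1 hεm.1.le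
      linarith only [h2, h3]
    have hexp : Real.exp (ε*(s-0)) - 1 ≤ Real.exp γ - 1 := by
      have := Real.exp_le_exp.mpr hεγ; linarith
    have h5 : (ε*(G^2/ω^2))/ε = G^2/ω^2 := by field_simp
    have hpos : (0:ℝ) ≤ G^2/ω^2 := by positivity
    have h6 := le_abs_self (EE k s)
    have h7 : G^2/ω^2 * (Real.exp (ε*(s-0)) - 1) ≤ G^2/ω^2 * (Real.exp γ - 1) :=
      mul_le_mul_of_nonneg_left hexp hpos
    rw [h5] at hmain
    calc EE k s ≤ |EE k s| := h6
      _ ≤ 0 * Real.exp (ε*(s-0)) + G^2/ω^2 * (Real.exp (ε*(s-0)) - 1) := hmain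
      _ = G^2/ω^2 * (Real.exp (ε*(s-0)) - 1) := by ring
      _ ≤ G^2/ω^2 * (Real.exp γ - 1) := h7
      _ ≤ ω₀^2/4 := hEB
  -- bootstrap
  set tmax := γ/ε with htmaxdef
  have htmax0 : 0 ≤ tmax := le_of_lt (div_pos hγ hεm.1)
  set A := {τ : ℝ | τ ∈ Set.Icc 0 tmax ∧ ∀ s ∈ Set.Icc (0:ℝ) τ, ∀ k, |v ε k s| ≤ R} with hAdef
  have h0A : (0:ℝ) ∈ A := by
    refine ⟨⟨le_rfl, htmax0⟩, ?_⟩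
    intro s hs k
    have hs0 : s = 0 := le_antisymm hs.2 hs.1
    rw [hs0, hv0 ε hεm k]
    simp
    linarith
  have hAbdd : BddAbove A := ⟨tmax, fun x hx => hx.1.2⟩
  have hAne : A.Nonempty := ⟨0, h0A⟩
  set τs := sSup A with hτdef
  have hτ0 : 0 ≤ τs := le_csSup hAbdd h0A
  have hτmax : τs ≤ tmax := csSup_le hAne fun x hx => hx.1.2
  have hτlt : ∀ s : ℝ, 0 ≤ s → s < τs → ∀ k, |v ε k s| ≤ R := by
    intro s hs0 hsτ k
    obtain ⟨t', ht'A, hst'⟩ := exists_lt_of_lt_csSup hAne hsτ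
    exact ht'A.2 s ⟨hs0, hst'.le⟩ k
  have hτA : τs ∈ A := by
    refine ⟨⟨hτ0, hτmax⟩, ?_⟩
    intro s hs k
    rcases lt_or_eq_of_le hs.2 with h | h
    · exact hτlt s hs.1 h k
    · subst h
      rcases eq_or_lt_of_le hτ0 with h0 | h0
      · rw [← h0, hv0 ε hεm k]; simp; linarith
      · have hclos : τs ∈ closure (Set.Ico (0:ℝ) τs) := by
          rw [closure_Ico h0.ne]; exact ⟨hτ0, le_rfl⟩
        have hne : (nhdsWithin τs (Set.Ico (0:ℝ) τs)).NeBot :=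
          mem_closure_iff_nhdsWithin_neBot.mp hclos
        have hcw : ContinuousWithinAt (fun x => |v ε k x|) (Set.Ico 0 τs) τs :=
          (((hcont0 k).abs) τs hτ0).mono (fun x hx => hx.1)
        exact le_of_tendsto hcw
          (Filter.eventually_of_mem self_mem_nhdsWithin (fun x hx => hτlt x hx.1 hx.2 k))
  have hEbd : ∀ s ∈ Set.Icc (0:ℝ) τs, ∀ k, EE k s ≤ ω₀^2/4 :=
    key τs hτ0 hτmax hτA.2
  -- improved bound on [0, τs]
  have hvb : ∀ s ∈ Set.Icc (0:ℝ) τs, ∀ k, |v ε k s| ≤ CTB + 1/2 := by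
    intro s hs k
    have hEk := hEbd s hs k
    simp only [hEEdef] at hEk
    have hwsq : (v ε k s - T k s)^2 ≤ (1/2:ℝ)^2 := by
      have hx : ωs k^2 * (v ε k s - T k s)^2 ≤ ω₀^2/4 := by
        linarith only [hEk, mul_nonneg (sq_nonneg ω) (sq_nonneg (dIci (v ε k) s - T1 k s))]
      have hY := wsq_aux (hω₀le k) hω₀ hx (sq_nonneg _)
      calc (v ε k s - T k s)^2 ≤ 1/4 := hY
        _ = (1/2:ℝ)^2 := by norm_num
    have hw : |v ε k s - T k s| ≤ 1/2 := abs_le_of_sq_le_sq'' (by norm_num) hwsq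
    calc |v ε k s| = |(v ε k s - T k s) + T k s| := by congr 1; ring
      _ ≤ |v ε k s - T k s| + |T k s| := abs_add_le _ _
      _ ≤ 1/2 + CTB := add_le_add hw (hTb k s)
      _ = CTB + 1/2 := by ring
  have hτeq : τs = tmax := by
    by_contra hne'
    have hτlt' : τs < tmax := lt_of_le_of_ne hτmax hne'
    have hφ : ContinuousWithinAt (fun s => ‖(fun k => v ε k s)‖) (Set.Ici 0) τs := by
      apply ContinuousWithinAt.norm
      apply continuousWithinAt_pi.mpr
      intro k
      exact (hcont0 k) τs hτ0
    have hφτ : ‖(fun k => v ε k τs)‖ < R := by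
      have h1 : ‖(fun k => v ε k τs)‖ ≤ CTB + 1/2 := by
        apply (pi_norm_le_iff_of_nonneg (by linarith)).mpr
        intro k
        simpa [Real.norm_eq_abs] using hvb τs ⟨hτ0, le_rfl⟩ k
      rw [hRdef]; linarith
    have hev : {s : ℝ | ‖(fun k => v ε k s)‖ < R} ∈ nhdsWithin τs (Set.Ici 0) :=
      hφ (Iio_mem_nhds hφτ)
    rw [Metric.mem_nhdsWithin_iff] at hev
    obtain ⟨δ, hδ, hball⟩ := hev
    set t' := min (τs + δ/2) tmax with ht'def
    have ht'1 : τs < t' := lt_min (by linarith) hτlt'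
    have ht'A : t' ∈ A := by
      refine ⟨⟨le_trans hτ0 ht'1.le, min_le_right _ _⟩, ?_⟩
      intro s hs k
      rcases le_or_gt s τs with h | h
      · exact hτA.2 s ⟨hs.1, h⟩ k
      · have hsb : s ∈ Metric.ball τs δ ∩ Set.Ici 0 := by
          constructor
          · rw [Metric.mem_ball, Real.dist_eq, abs_of_pos (by linarith)]
            have h2 : s ≤ τs + δ/2 := le_trans hs.2 (min_le_left _ _)
            linarith
          · exact hs.1
        have h3 := hball hsb
        calc |v ε k s| = ‖(fun j => v ε j s) k‖ := by simp [Real.norm_eq_abs]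
          _ ≤ ‖(fun j => v ε j s)‖ := norm_le_pi_norm (f := fun j => v ε j s) k
          _ ≤ R := (hball hsb).le
    have := le_csSup hAbdd ht'A
    linarith
  -- final estimates at t
  have htτ : t ∈ Set.Icc (0:ℝ) τs := by rw [hτeq]; exact ht
  have hvbt : ∀ j, |v ε j t| ≤ CTB + 1/2 := fun j => hvb t htτ j
  have hnorm : ‖(fun j => v ε j t)‖ ≤ R := by
    apply (pi_norm_le_iff_of_nonneg hR.le).mpr
    intro j
    rw [Real.norm_eq_abs]
    have := hvbt j
    rw [hRdef]
    linarith only [this]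
  have hsum : ∀ k, |v ε k t| + |dIci (v ε k) t| + |dIci (dIci (v ε k)) t|
      ≤ (CTB + 1) + (CTB + ω₀/(2*ω)) + (M + εmax*G + (ωs k)^2*(CTB+1))/ω^2 := by
    intro k
    have hEk := hEbd t htτ k
    simp only [hEEdef] at hEk
    have h_v : |v ε k t| ≤ CTB + 1 := by linarith only [hvbt k]
    have hw1sq : (dIci (v ε k) t - T1 k t)^2 ≤ (ω₀/(2*ω))^2 := by
      have hx : ω^2 * (dIci (v ε k) t - T1 k t)^2 ≤ ω₀^2/4 := by
        linarith only [hEk, mul_nonneg (sq_nonneg (ωs k)) (sq_nonneg (v ε k t - T k t))]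
      rw [div_pow, le_div_iff₀ (by positivity)]
      calc (dIci (v ε k) t - T1 k t)^2 * (2*ω)^2
          = (ω^2*(dIci (v ε k) t - T1 k t)^2)*4 := by ring
        _ ≤ (ω₀^2/4)*4 := by linarith only [hx]
        _ = ω₀^2 := by ring
    have hw1 : |dIci (v ε k) t - T1 k t| ≤ ω₀/(2*ω) :=
      abs_le_of_sq_le_sq'' (by positivity) hw1sq
    have h_v1 : |dIci (v ε k) t| ≤ CTB + ω₀/(2*ω) := by
      calc |dIci (v ε k) t| = |(dIci (v ε k) t - T1 k t) + T1 k t| := by congr 1; ring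
        _ ≤ |dIci (v ε k) t - T1 k t| + |T1 k t| := abs_add_le _ _
        _ ≤ ω₀/(2*ω) + CTB := add_le_add hw1 (hT1b k t)
        _ = CTB + ω₀/(2*ω) := by ring
    have hgt : |g k t (fun j => v ε j t) ε| ≤ G := hgbd k t ht.1 ε hεm _ hnorm
    have hodet := hodeε k t ht.1
    have h_v2 : |dIci (dIci (v ε k)) t| ≤ (M + εmax*G + (ωs k)^2*(CTB+1))/ω^2 := by
      rw [le_div_iff₀ (by positivity : (0:ℝ) < ω^2)]
      have habs2 : |dIci (dIci (v ε k)) t| * ω^2 = |dIci (dIci (v ε k)) t * ω^2| := by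
        rw [abs_mul, abs_of_pos (by positivity : (0:ℝ) < ω^2)]
      have heq : dIci (dIci (v ε k)) t * ω^2
          = S k t + ε * g k t (fun j => v ε j t) ε - (ωs k)^2 * v ε k t := by
        linarith only [hodet]
      rw [habs2, heq]
      have hS := hSbd k t
      have hεg : |ε * g k t (fun j => v ε j t) ε| ≤ εmax * G := by
        rw [abs_mul, abs_of_pos hεm.1]
        exact mul_le_mul hεm.2 hgt (abs_nonneg _) hεmax.le
      have hv' : |(ωs k)^2 * v ε k t| ≤ (ωs k)^2*(CTB+1) := by
        rw [abs_mul, abs_of_nonneg (sq_nonneg (ωs k))]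
        exact mul_le_mul_of_nonneg_left h_v (sq_nonneg _)
      have htri : |S k t + ε * g k t (fun j => v ε j t) ε - (ωs k)^2 * v ε k t|
          ≤ |S k t + ε * g k t (fun j => v ε j t) ε| + |(ωs k)^2 * v ε k t| := by
        rw [sub_eq_add_neg, ← abs_neg ((ωs k)^2 * v ε k t)]
        exact abs_add_le (S k t + ε * g k t (fun j => v ε j t) ε) (-((ωs k)^2 * v ε k t))
      have htri2 : |S k t + ε * g k t (fun j => v ε j t) ε|
          ≤ |S k t| + |ε * g k t (fun j => v ε j t) ε| := abs_add_le _ _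
      linarith only [htri, htri2, hS, hεg, hv']
    linarith only [h_v, h_v1, h_v2]
  calc ∑ k, (|v ε k t| + |dIci (v ε k) t| + |dIci (dIci (v ε k)) t|)
      ≤ ∑ k, ((CTB + 1) + (CTB + ω₀/(2*ω)) + (M + εmax*G + (ωs k)^2*(CTB+1))/ω^2) :=
        Finset.sum_le_sum (fun k _ => hsum k)
    _ ≤ C := by rw [hCdef]; linarith only []
end

section
/- Let λ > 0, ω > 0 and d, ā, σ ∈ ℝ. If either 9d²ā⁴ < 16ω²λ², or 9d²ā⁴ ≥ 16ω²λ² and σ < 3dā²/(4ω) − (1/2)√(9d²ā⁴/(16ω²) − λ²), then λ²/4 + σ² − 3dσā²/(2ω) + 27d²ā⁴/(64ω²) > 0. -/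
/-- Positivity of the leading term of the Jacobian determinant of the modulation system
at a stationary point, under the stability condition on the detuning `σ`. -/
theorem stmt_6 (lam ω d abar σ : ℝ) (hlam : 0 < lam) (hω : 0 < ω)
    (h : 9*d^2*abar^4 < 16*ω^2*lam^2 ∨
      (16*ω^2*lam^2 ≤ 9*d^2*abar^4 ∧
        σ < 3*d*abar^2/(4*ω) - (1/2) * Real.sqrt (9*d^2*abar^4/(16*ω^2) - lam^2))) :
    0 < lam^2/4 + σ^2 - 3*d*σ*abar^2/(2*ω) + 27*d^2*abar^4/(64*ω^2) := by
  have hω' : ω ≠ 0 := ne_of_gt hω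
  set p : ℝ := 3*d*abar^2/(4*ω) with hp
  have key : lam^2/4 + σ^2 - 3*d*σ*abar^2/(2*ω) + 27*d^2*abar^4/(64*ω^2)
      = (σ - p)^2 + (lam^2 - p^2)/4 := by
    rw [hp]; field_simp
    ring
  rw [key]
  have hpsq : p^2 = 9*d^2*abar^4/(16*ω^2) := by
    rw [hp]; field_simp; ring
  rcases h with h | ⟨h1, h2⟩
  · have : p^2 < lam^2 := by
      rw [hpsq]
      rw [div_lt_iff₀ (by positivity)]
      nlinarith
    nlinarith [sq_nonneg (σ - p)]
  · have harg : (0:ℝ) ≤ 9*d^2*abar^4/(16*ω^2) - lam^2 := by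
      rw [sub_nonneg, le_div_iff₀ (by positivity : (0:ℝ) < 16*ω^2)]
      nlinarith
    have hsq := Real.sq_sqrt harg
    have hnn := Real.sqrt_nonneg (9*d^2*abar^4/(16*ω^2) - lam^2)
    set s := Real.sqrt (9*d^2*abar^4/(16*ω^2) - lam^2) with hs
    have hps : p - σ > (1/2) * s := by linarith
    nlinarith [sq_nonneg (σ - p)]
end
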